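/- Let γ₁₂ and γ₂₁ be class-K functions with γ₁₂∘γ₂₁(s) < s for all s > 0. Suppose continuous functions y₁, y₂ : [0,τ) → ℝ≥0 satisfy, for all t ∈ [0,τ): y₁(t) ≤ max{c, γ₁₂(sup_{s<t} y₂(s)), g₁} and y₂(t) ≤ max{c, γ₂₁(sup_{s<t} y₁(s)), g₂}, where c, g₁, g₂ ≥ 0 are constants. Then for all t ∈ [0,τ): y₁(t) ≤ max{c, γ₁₂(max{c, g₂}), g₁} and y₂(t) ≤ max{c, γ₂₁(max{c, g₁}), g₂}. -/

import Mathlib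

open NNReal

def ClassK (γ : ℝ≥0 → ℝ≥0) : Prop := Continuous γ ∧ StrictMono γ ∧ γ 0 = 0

theorem trajectory_smallgain_two (γ₁₂ γ₂₁ : ℝ≥0 → ℝ≥0)
    (h₁₂ : ClassK γ₁₂) (h₂₁ : ClassK γ₂₁)
    (hsg : ∀ s : ℝ≥0, 0 < s → γ₁₂ (γ₂₁ s) < s)
    (τ : EReal) (y₁ y₂ : ℝ → ℝ≥0) (c g₁ g₂ : ℝ≥0)
    (hy₁ : ContinuousOn y₁ {t : ℝ | 0 ≤ t ∧ (t : EReal) < τ})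
    (hy₂ : ContinuousOn y₂ {t : ℝ | 0 ≤ t ∧ (t : EReal) < τ})
    (hb₁ : ∀ t : ℝ, 0 ≤ t → (t : EReal) < τ →
      y₁ t ≤ max c (max (γ₁₂ (⨆ s : Set.Ico (0:ℝ) t, y₂ s)) g₁))
    (hb₂ : ∀ t : ℝ, 0 ≤ t → (t : EReal) < τ →
      y₂ t ≤ max c (max (γ₂₁ (⨆ s : Set.Ico (0:ℝ) t, y₁ s)) g₂)) :
    ∀ t : ℝ, 0 ≤ t → (t : EReal) < τ →
      y₁ t ≤ max c (max (γ₁₂ (max c g₂)) g₁) ∧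
      y₂ t ≤ max c (max (γ₂₁ (max c g₁)) g₂) := by
  obtain ⟨hc₁₂, hm₁₂, hz₁₂⟩ := h₁₂
  obtain ⟨hc₂₁, hm₂₁, hz₂₁⟩ := h₂₁
  set a := max c g₁ with ha
  set b := max c g₂ with hb
  -- γ₂₁ ∘ γ₁₂ is also a contraction
  have lem2 : ∀ s : ℝ≥0, γ₂₁ (γ₁₂ s) ≤ s := by
    intro s
    by_contra h
    push_neg at h
    have h0 : 0 < γ₁₂ s := by
      rcases eq_or_lt_of_le (zero_le : 0 ≤ s) with hs | hs
      · exfalso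
        rw [← hs, hz₁₂, hz₂₁] at h
        exact absurd h (lt_irrefl _)
      · rw [← hz₁₂]; exact hm₁₂ hs
    exact absurd (lt_trans (hm₁₂ h) (hsg _ h0)) (lt_irrefl _)
  intro t ht htτ
  have hsub : Set.Icc (0:ℝ) t ⊆ {s : ℝ | 0 ≤ s ∧ (s : EReal) < τ} := by
    intro s hs
    exact ⟨hs.1, lt_of_le_of_lt (EReal.coe_le_coe_iff.mpr hs.2) htτ⟩
  have hne : Nonempty (Set.Icc (0:ℝ) t) := ⟨⟨0, le_refl _, ht⟩⟩
  -- boundedness of ranges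
  obtain ⟨C₁, hC₁⟩ : BddAbove (y₁ '' Set.Icc 0 t) :=
    (isCompact_Icc.image_of_continuousOn (hy₁.mono hsub)).bddAbove
  obtain ⟨C₂, hC₂⟩ : BddAbove (y₂ '' Set.Icc 0 t) :=
    (isCompact_Icc.image_of_continuousOn (hy₂.mono hsub)).bddAbove
  have hbdd₁ : BddAbove (Set.range fun s : Set.Icc (0:ℝ) t => y₁ s) := by
    refine ⟨C₁, ?_⟩
    rintro _ ⟨s, rfl⟩
    exact hC₁ ⟨s, s.2, rfl⟩
  have hbdd₂ : BddAbove (Set.range fun s : Set.Icc (0:ℝ) t => y₂ s) := by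
    refine ⟨C₂, ?_⟩
    rintro _ ⟨s, rfl⟩
    exact hC₂ ⟨s, s.2, rfl⟩
  set S₁ := ⨆ s : Set.Icc (0:ℝ) t, y₁ s with hS₁
  set S₂ := ⨆ s : Set.Icc (0:ℝ) t, y₂ s with hS₂
  have hle₁ : ∀ s ∈ Set.Icc (0:ℝ) t, y₁ s ≤ S₁ := fun s hs =>
    le_ciSup hbdd₁ (⟨s, hs⟩ : Set.Icc (0:ℝ) t)
  have hle₂ : ∀ s ∈ Set.Icc (0:ℝ) t, y₂ s ≤ S₂ := fun s hs =>
    le_ciSup hbdd₂ (⟨s, hs⟩ : Set.Icc (0:ℝ) t)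
  -- sup over Ico 0 s is ≤ S when s ∈ [0,t]
  have hico₁ : ∀ s ∈ Set.Icc (0:ℝ) t, (⨆ u : Set.Ico (0:ℝ) s, y₁ u) ≤ S₁ := by
    intro s hs
    rcases isEmpty_or_nonempty (Set.Ico (0:ℝ) s) with hE | hN
    · rw [ciSup_of_empty]; exact zero_le
    · exact ciSup_le fun u => hle₁ u ⟨u.2.1, le_trans u.2.2.le hs.2⟩
  have hico₂ : ∀ s ∈ Set.Icc (0:ℝ) t, (⨆ u : Set.Ico (0:ℝ) s, y₂ u) ≤ S₂ := by
    intro s hs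
    rcases isEmpty_or_nonempty (Set.Ico (0:ℝ) s) with hE | hN
    · rw [ciSup_of_empty]; exact zero_le
    · exact ciSup_le fun u => hle₂ u ⟨u.2.1, le_trans u.2.2.le hs.2⟩
  -- circular inequalities
  have h₁ : S₁ ≤ max a (γ₁₂ S₂) := by
    refine ciSup_le fun s => ?_
    have hsτ : ((s : ℝ) : EReal) < τ := (hsub s.2).2
    calc y₁ s ≤ max c (max (γ₁₂ (⨆ u : Set.Ico (0:ℝ) s, y₂ u)) g₁) := hb₁ s s.2.1 hsτ
      _ ≤ max a (γ₁₂ S₂) := by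
          apply max_le (le_max_of_le_left (le_max_left _ _))
          exact max_le (le_max_of_le_right (hm₁₂.monotone (hico₂ s s.2)))
            (le_max_of_le_left (le_max_right _ _))
  have h₂ : S₂ ≤ max b (γ₂₁ S₁) := by
    refine ciSup_le fun s => ?_
    have hsτ : ((s : ℝ) : EReal) < τ := (hsub s.2).2
    calc y₂ s ≤ max c (max (γ₂₁ (⨆ u : Set.Ico (0:ℝ) s, y₁ u)) g₂) := hb₂ s s.2.1 hsτ
      _ ≤ max b (γ₂₁ S₁) := by
          apply max_le (le_max_of_le_left (le_max_left _ _))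
          exact max_le (le_max_of_le_right (hm₂₁.monotone (hico₁ s s.2)))
            (le_max_of_le_left (le_max_right _ _))
  -- close the loop with the small-gain condition
  have hS₁B : S₁ ≤ max a (γ₁₂ b) := by
    by_contra h
    push_neg at h
    have h0 : 0 < S₁ := lt_of_le_of_lt zero_le h
    have hch : S₁ ≤ max a (max (γ₁₂ b) (γ₁₂ (γ₂₁ S₁))) := by
      calc S₁ ≤ max a (γ₁₂ S₂) := h₁
        _ ≤ max a (γ₁₂ (max b (γ₂₁ S₁))) :=
            max_le_max le_rfl (hm₁₂.monotone h₂)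
        _ = max a (max (γ₁₂ b) (γ₁₂ (γ₂₁ S₁))) := by
            rw [hm₁₂.monotone.map_max]
    have hfin : max a (max (γ₁₂ b) (γ₁₂ (γ₂₁ S₁))) < S₁ :=
      max_lt (lt_of_le_of_lt (le_max_left _ _) h)
        (max_lt (lt_of_le_of_lt (le_max_right _ _) h) (hsg S₁ h0))
    exact absurd (lt_of_le_of_lt hch hfin) (lt_irrefl _)
  have hS₂B : S₂ ≤ max b (γ₂₁ a) := by
    calc S₂ ≤ max b (γ₂₁ S₁) := h₂
      _ ≤ max b (γ₂₁ (max a (γ₁₂ b))) := max_le_max le_rfl (hm₂₁.monotone hS₁B)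
      _ = max b (max (γ₂₁ a) (γ₂₁ (γ₁₂ b))) := by rw [hm₂₁.monotone.map_max]
      _ ≤ max b (γ₂₁ a) := by
          exact sup_le le_sup_left (sup_le le_sup_right (le_sup_of_le_left (lem2 b)))
  have htmem : t ∈ Set.Icc (0:ℝ) t := ⟨ht, le_refl _⟩
  constructor
  · calc y₁ t ≤ S₁ := hle₁ t htmem
      _ ≤ max a (γ₁₂ b) := hS₁B
      _ = max c (max (γ₁₂ b) g₁) := by
          rw [ha, sup_right_comm, sup_assoc]
  · calc y₂ t ≤ S₂ := hle₂ t htmem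
      _ ≤ max b (γ₂₁ a) := hS₂B
      _ = max c (max (γ₂₁ a) g₂) := by
          rw [hb, sup_right_comm, sup_assoc]
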